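/- Let G be a finite simple graph, A a nonempty set of vertices of G, and r a nonnegative integer. Suppose V_0,…,V_q are subsets of V(G) with V_0 ∪ … ∪ V_q = V(G), and S_0,…,S_q are sets of vertices with S_i ⊆ V_i for every i, such that: for every vertex v ∈ V(G) there exists i ∈ {0,…,q} with v ∈ V_i and such that for every a ∈ A with dist_G(v,a) ≤ r, there is a shortest (v,a)-path P in G whose maximal prefix contained in V_i intersects S_i (i.e., writing P = p_0 p_1 … p_m with p_0 = v and p_m = a, and letting j be the largest index with {p_0,…,p_j} ⊆ V_i, some p_k with k ≤ j belongs to S_i). Then |Π_{r,G}[V(G) → A]| ≤ Σ_{i=0}^{q} |Π_{r,G[V_i]}[V_i → S_i]|, where G[V_i] denotes the subgraph of G induced by V_i. -/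

import Mathlib

open SimpleGraph

/-- The profile of `u` on `A` at distance `r`: maps `a ∈ A` to `dist_G(u,a)` if this is
at most `r`, and to `∞` otherwise. -/
noncomputable def SimpleGraph.profile {V : Type*} (G : SimpleGraph V) (r : ℕ) (A : Set V)
    (u : V) : A → ℕ∞ :=
  fun a => if G.edist u (a : V) ≤ r then G.edist u (a : V) else ⊤

/-- `Π_{r,G}[U → A]`: the set of distance-`r` profiles on `A` of vertices of `U`,
excluding the constant-`∞` profile. -/
noncomputable def SimpleGraph.profiles {V : Type*} (G : SimpleGraph V) (r : ℕ) (U A : Set V) :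
    Set (A → ℕ∞) :=
  {f | ∃ u ∈ U, f = G.profile r A u} \ {fun _ => ⊤}

/-- Covers-and-cuts lemma: if `V₀,…,V_q` cover `V(G)`, `Sᵢ ⊆ Vᵢ`, and every vertex `v`
lies in some `Vᵢ` such that for every `a ∈ A` at distance at most `r` there is a shortest
`(v,a)`-path whose maximal prefix inside `Vᵢ` meets `Sᵢ`, then
`|Π_{r,G}[V(G) → A]| ≤ Σᵢ |Π_{r,G[Vᵢ]}[Vᵢ → Sᵢ]|`. -/
lemma edist_le_induce_edist {V : Type*} (G : SimpleGraph V) (s : Set V) (u w : s) :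
    G.edist u.1 w.1 ≤ (G.induce s).edist u w := by
  by_cases h : (G.induce s).Reachable u w
  · obtain ⟨p, hp⟩ := h.exists_walk_length_eq_edist
    rw [← hp]
    calc G.edist u.1 w.1 ≤ ((p.map (SimpleGraph.Embedding.induce s).toHom).length : ℕ∞) :=
          edist_le _
      _ = (p.length : ℕ∞) := by rw [Walk.length_map]
  · rw [edist_eq_top_of_not_reachable h]; exact le_top

lemma split_walk {V : Type*} {G : SimpleGraph V} {s : Set V} :
    ∀ {v a : V} (w : G.Walk v a) (n : ℕ), (∀ y ∈ w.support.take n, y ∈ s) →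
      ∀ {x : V}, x ∈ w.support.take n →
      ∃ (hv : v ∈ s) (hxs : x ∈ s), ∃ (p : (G.induce s).Walk ⟨v, hv⟩ ⟨x, hxs⟩)
        (qq : G.Walk x a), p.length + qq.length ≤ w.length := by
  intro v a w
  induction w with
  | nil =>
    intro n hn x hx
    have hxv := List.mem_of_mem_take hx
    rw [Walk.support_nil, List.mem_singleton] at hxv
    subst hxv
    have hv := hn x hx
    exact ⟨hv, hv, Walk.nil, Walk.nil, by simp⟩
  | @cons v v' a h w' ih =>
    intro n hn x hx
    match n with
    | 0 => simp at hx
    | (m+1) =>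
      rw [Walk.support_cons, List.take_succ_cons] at hx hn
      have hv : v ∈ s := hn v (by simp)
      have hn' : ∀ y ∈ w'.support.take m, y ∈ s := fun y hy => hn y (by simp [hy])
      rcases List.mem_cons.mp hx with rfl | hx'
      · exact ⟨hv, hv, Walk.nil, Walk.cons h w', by simp⟩
      · obtain ⟨hv', hxs, p', qq, hpq⟩ := ih m hn' hx'
        have hadj : (G.induce s).Adj ⟨v, hv⟩ ⟨v', hv'⟩ := by
          simpa [SimpleGraph.comap] using h
        refine ⟨hv, hxs, Walk.cons hadj p', qq, ?_⟩
        simpa [Walk.length_cons, Nat.succ_add] using Nat.add_le_add_right hpq 1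

lemma key_lemma {V : Type*} {G : SimpleGraph V} {s t : Set V} (hts : t ⊆ s)
    {v a : V} (hv : v ∈ s) (hr : G.edist v a ≠ ⊤)
    (H : ∃ w : G.Walk v a, w.length = G.dist v a ∧
      ∃ n ≤ w.support.length, (∀ x ∈ w.support.take n, x ∈ s) ∧
        ∃ x ∈ w.support.take n, x ∈ t) :
    ∃ x, ∃ hx : x ∈ t,
      (G.induce s).edist ⟨v, hv⟩ ⟨x, hts hx⟩ + G.edist x a ≤ G.edist v a := by
  obtain ⟨w, hwlen, n, -, hn, x, hxtake, hxt⟩ := H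
  obtain ⟨hv', hxs, p, qq, hpq⟩ := split_walk w n hn hxtake
  refine ⟨x, hxt, ?_⟩
  calc (G.induce s).edist ⟨v, hv⟩ ⟨x, hts hxt⟩ + G.edist x a
      ≤ (p.length : ℕ∞) + (qq.length : ℕ∞) := add_le_add (edist_le p) (edist_le qq)
    _ = ((p.length + qq.length : ℕ) : ℕ∞) := by push_cast; ring
    _ ≤ (w.length : ℕ∞) := by exact_mod_cast hpq
    _ = ((G.dist v a : ℕ) : ℕ∞) := by rw [hwlen]
    _ = G.edist v a := ENat.coe_toNat hr

lemma ncard_iUnion_le' {α ι : Type*} [Fintype ι] (T : ι → Set α)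
    (hT : ∀ i, (T i).Finite) : (⋃ i, T i).ncard ≤ ∑ i, (T i).ncard := by
  classical
  have h1 : (⋃ i, T i) = ↑(Finset.univ.biUnion fun i => (hT i).toFinset) := by
    ext x; simp
  rw [h1, Set.ncard_coe_finset]
  refine Finset.card_biUnion_le.trans (Finset.sum_le_sum fun i _ => ?_)
  rw [Set.ncard_eq_toFinset_card _ (hT i)]

/-- Reconstruction map: from a local profile on `Subtype.val ⁻¹' S ⊆ W`, rebuild a
candidate global profile on `A`. -/
noncomputable def Phi {V : Type*} (G : SimpleGraph V) (r : ℕ) (A W S : Set V)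
    (ρ : (Subtype.val ⁻¹' S : Set W) → ℕ∞) (a : A) : ℕ∞ :=
  if (⨅ s : (Subtype.val ⁻¹' S : Set W), ρ s + G.edist s.1.1 a.1) ≤ (r : ℕ∞)
  then ⨅ s : (Subtype.val ⁻¹' S : Set W), ρ s + G.edist s.1.1 a.1 else ⊤

theorem covers_and_cuts
    {V : Type} [Fintype V] (G : SimpleGraph V) (A : Set V) (hA : A.Nonempty)
    (r q : ℕ) (Vf Sf : Fin (q + 1) → Set V)
    (hcover : ⋃ i, Vf i = Set.univ)
    (hsub : ∀ i, Sf i ⊆ Vf i)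
    (hmain : ∀ v : V, ∃ i, v ∈ Vf i ∧ ∀ a ∈ A, G.edist v a ≤ r →
      ∃ w : G.Walk v a, w.length = G.dist v a ∧
        ∃ n ≤ w.support.length, (∀ x ∈ w.support.take n, x ∈ Vf i) ∧
          ∃ x ∈ w.support.take n, x ∈ Sf i) :
    (G.profiles r Set.univ A).ncard ≤
      ∑ i : Fin (q + 1),
        ((G.induce (Vf i)).profiles r Set.univ (Subtype.val ⁻¹' Sf i)).ncard := by

  classical
  set T : ∀ i : Fin (q + 1), Set ((Subtype.val ⁻¹' Sf i : Set (Vf i)) → ℕ∞) :=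
    fun i => (G.induce (Vf i)).profiles r Set.univ (Subtype.val ⁻¹' Sf i) with hTdef
  have hfin : ∀ i, (T i).Finite := by
    intro i
    have hss : T i ⊆ Set.range ((G.induce (Vf i)).profile r (Subtype.val ⁻¹' Sf i)) := by
      rintro f ⟨⟨u, -, rfl⟩, -⟩; exact ⟨u, rfl⟩
    exact (Set.finite_range _).subset hss
  have hsubset : G.profiles r Set.univ A ⊆
      ⋃ i, Phi G r A (Vf i) (Sf i) '' T i := by
    rintro f ⟨⟨u, -, rfl⟩, hf⟩
    rw [Set.mem_singleton_iff] at hf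
    obtain ⟨i, hui, hu⟩ := hmain u
    set ρ : (Subtype.val ⁻¹' Sf i : Set (Vf i)) → ℕ∞ :=
      (G.induce (Vf i)).profile r (Subtype.val ⁻¹' Sf i) ⟨u, hui⟩ with hρ
    -- L1 : the global distance is a lower bound for every term of the infimum
    have L1 : ∀ (a : A) (s : (Subtype.val ⁻¹' Sf i : Set (Vf i))),
        G.edist u a.1 ≤ ρ s + G.edist s.1.1 a.1 := by
      intro a s
      rw [hρ]
      show G.edist u a.1 ≤
        (if (G.induce (Vf i)).edist ⟨u, hui⟩ s.1 ≤ (r : ℕ∞)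
          then (G.induce (Vf i)).edist ⟨u, hui⟩ s.1 else ⊤) + G.edist s.1.1 a.1
      split_ifs with hc
      · calc G.edist u a.1 ≤ G.edist u s.1.1 + G.edist s.1.1 a.1 := SimpleGraph.edist_triangle
          _ ≤ (G.induce (Vf i)).edist ⟨u, hui⟩ s.1 + G.edist s.1.1 a.1 :=
            add_le_add (edist_le_induce_edist G (Vf i) ⟨u, hui⟩ s.1) le_rfl
      · simp
    -- L2 : if the global distance is at most r, the infimum attains it
    have L2 : ∀ a : A, G.edist u a.1 ≤ (r : ℕ∞) →
        ∃ s : (Subtype.val ⁻¹' Sf i : Set (Vf i)),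
          ρ s + G.edist s.1.1 a.1 ≤ G.edist u a.1 ∧ ρ s ≤ (r : ℕ∞) := by
      intro a hle
      have hne : G.edist u a.1 ≠ ⊤ := fun h => by simp [h] at hle
      obtain ⟨x, hx, hkey⟩ := key_lemma (hsub i) hui hne (hu a a.2 hle)
      refine ⟨⟨⟨x, hsub i hx⟩, hx⟩, ?_, ?_⟩
      · have hρs : ρ ⟨⟨x, hsub i hx⟩, hx⟩ ≤ (G.induce (Vf i)).edist ⟨u, hui⟩ ⟨x, hsub i hx⟩ := by
          rw [hρ]
          show (if (G.induce (Vf i)).edist ⟨u, hui⟩ ⟨x, hsub i hx⟩ ≤ (r : ℕ∞)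
            then (G.induce (Vf i)).edist ⟨u, hui⟩ ⟨x, hsub i hx⟩ else ⊤) ≤ _
          split_ifs with hc
          · exact le_rfl
          · exact absurd ((le_self_add.trans hkey).trans hle) hc
        exact (add_le_add hρs le_rfl).trans hkey
      · rw [hρ]
        show (if (G.induce (Vf i)).edist ⟨u, hui⟩ ⟨x, hsub i hx⟩ ≤ (r : ℕ∞)
          then (G.induce (Vf i)).edist ⟨u, hui⟩ ⟨x, hsub i hx⟩ else ⊤) ≤ (r : ℕ∞)
        split_ifs with hc
        · exact hc
        · exact absurd ((le_self_add.trans hkey).trans hle) hc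
    -- there is some a ∈ A within distance r of u
    have hfa : ∃ a : A, G.edist u a.1 ≤ (r : ℕ∞) := by
      by_contra hcon
      push_neg at hcon
      apply hf
      funext a
      show (if G.edist u a.1 ≤ (r : ℕ∞) then G.edist u a.1 else ⊤) = ⊤
      rw [if_neg (not_le.mpr (hcon a))]
    refine Set.mem_iUnion.mpr ⟨i, ρ, ⟨⟨⟨u, hui⟩, Set.mem_univ _, hρ⟩, ?_⟩, ?_⟩
    · -- ρ is not the constant-⊤ function
      rw [Set.mem_singleton_iff]
      intro hcon
      obtain ⟨a, ha⟩ := hfa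
      obtain ⟨s, -, hs2⟩ := L2 a ha
      rw [hcon] at hs2
      exact absurd hs2 (by simp)
    · -- Phi reconstructs the profile of u
      funext a
      have hm_ge : G.edist u a.1 ≤
          ⨅ s : (Subtype.val ⁻¹' Sf i : Set (Vf i)), ρ s + G.edist s.1.1 a.1 :=
        le_iInf (L1 a)
      show Phi G r A (Vf i) (Sf i) ρ a =
        (if G.edist u a.1 ≤ (r : ℕ∞) then G.edist u a.1 else ⊤)
      unfold Phi
      by_cases hle : G.edist u a.1 ≤ (r : ℕ∞)
      · obtain ⟨s, hs1, -⟩ := L2 a hle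
        have hm_le : (⨅ s : (Subtype.val ⁻¹' Sf i : Set (Vf i)),
            ρ s + G.edist s.1.1 a.1) ≤ G.edist u a.1 := (iInf_le _ s).trans hs1
        have hm : (⨅ s : (Subtype.val ⁻¹' Sf i : Set (Vf i)),
            ρ s + G.edist s.1.1 a.1) = G.edist u a.1 := le_antisymm hm_le hm_ge
        rw [hm, if_pos hle]
      · have hnot : ¬ (⨅ s : (Subtype.val ⁻¹' Sf i : Set (Vf i)),
            ρ s + G.edist s.1.1 a.1) ≤ (r : ℕ∞) := fun h => hle (hm_ge.trans h)
        rw [if_neg hnot, if_neg hle]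
  calc (G.profiles r Set.univ A).ncard
      ≤ (⋃ i, Phi G r A (Vf i) (Sf i) '' T i).ncard :=
        Set.ncard_le_ncard hsubset (Set.finite_iUnion fun i => (hfin i).image _)
    _ ≤ ∑ i, (Phi G r A (Vf i) (Sf i) '' T i).ncard :=
        ncard_iUnion_le' _ (fun i => (hfin i).image _)
    _ ≤ ∑ i, (T i).ncard := Finset.sum_le_sum fun i _ => Set.ncard_image_le (hfin i)
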